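/- With the same data, the equation C_z = −(H − i√α) A − 2 p e^{−2u} Ā holds for all z ∈ ℂ, where C_z = ∂C/∂z. -/

import Mathlib

/-- `D(z) = 4(1−α)|z|² + (H²+α)(|z|²+1)²`. -/
noncomputable def Dd (H α : ℝ) (z : ℂ) : ℝ :=
  4 * (1 - α) * Complex.normSq z + (H ^ 2 + α) * (Complex.normSq z + 1) ^ 2

/-- `A(z) = −2(H + i√α) z̄ / D(z)`. -/
noncomputable def Af (H α : ℝ) (z : ℂ) : ℂ :=
  -2 * ((H : ℂ) + (Real.sqrt α : ℂ) * Complex.I) * (starRingEnd ℂ) z / (Dd H α z : ℂ)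

/-- `C(z) = (|z|² − 1)/(|z|² + 1)`. -/
noncomputable def Cf (z : ℂ) : ℝ := (Complex.normSq z - 1) / (Complex.normSq z + 1)

/-- `e^{2u(z)} = 4(|z|²+1)²(H²+α)/D(z)²`. -/
noncomputable def e2u (H α : ℝ) (z : ℂ) : ℝ :=
  4 * (Complex.normSq z + 1) ^ 2 * (H ^ 2 + α) / (Dd H α z) ^ 2

/-- `p(z) = (2(1−α)/(H + i√α)) A(z)²`. -/
noncomputable def pf (H α : ℝ) (z : ℂ) : ℂ :=
  2 * ((1 : ℂ) - α) / ((H : ℂ) + (Real.sqrt α : ℂ) * Complex.I) * (Af H α z) ^ 2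

/-- Wirtinger derivative `∂_{z̄} = (∂_x + i ∂_y)/2`. -/
noncomputable def dzbar (f : ℂ → ℂ) (z : ℂ) : ℂ :=
  (fderiv ℝ f z 1 + Complex.I * fderiv ℝ f z Complex.I) / 2

/-- Wirtinger derivative `∂_z = (∂_x − i ∂_y)/2`. -/
noncomputable def dz (f : ℂ → ℂ) (z : ℂ) : ℂ :=
  (fderiv ℝ f z 1 - Complex.I * fderiv ℝ f z Complex.I) / 2

/-- Pure algebraic identity behind the equation. -/
lemma alg (a b κ d E w z ρ α' : ℂ) (ha : a ≠ 0) (hκ : κ ≠ 0) (hρ : ρ + 1 ≠ 0) (hd : d ≠ 0)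
    (hab : a * b = κ) (hwz : z * w = ρ)
    (hdval : d = 4*(1-α')*ρ + κ*(ρ+1)^2) (hE : E = 4*(ρ+1)^2*κ/d^2) :
    4*w/(ρ+1)^2/2
      = -b * (-2*a*w/d) - 2*(2*(1-α')/a*(-2*a*w/d)^2) * E⁻¹ * (-2*b*z/d) := by
  have hE' : E⁻¹ = d^2/(4*(ρ+1)^2*κ) := by rw [hE, inv_div]
  rw [hE']
  obtain ⟨q, hq⟩ : ∃ q, ρ + 1 = q := ⟨_, rfl⟩
  rw [hq] at hρ hdval ⊢
  have hq2 : q^2 ≠ 0 := pow_ne_zero 2 hρ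
  have hden : a*d^2*(4*q^2*κ)*d ≠ 0 :=
    mul_ne_zero (mul_ne_zero (mul_ne_zero ha (pow_ne_zero 2 hd))
      (mul_ne_zero (mul_ne_zero (by norm_num : (4:ℂ) ≠ 0) hq2) hκ)) hd
  have hqd : q^2*d ≠ 0 := mul_ne_zero hq2 hd
  have t2a : 2*(2*(1-α')/a*(-2*a*w/d)^2) * (d^2/(4*q^2*κ)) * (-2*b*z/d)
      = (2*(2*(1-α')*(4*(a^2)*w^2))*d^2*(-2*b*z)) / (a*d^2*(4*q^2*κ)*d) := by
    ring
  have t2b : (2*(2*(1-α')*(4*(a^2)*w^2))*d^2*(-2*b*z)) / (a*d^2*(4*q^2*κ)*d)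
      = -(8*(1-α')*((a*b)*(z*w))*w)/(κ*(q^2*d)) := by
    rw [div_eq_div_iff hden (mul_ne_zero hκ hqd)]
    ring
  have t2c : -(8*(1-α')*((a*b)*(z*w))*w)/(κ*(q^2*d)) = -(8*(1-α')*(ρ*w))/(q^2*d) := by
    rw [hab, hwz, div_eq_div_iff (mul_ne_zero hκ hqd) hqd]
    ring
  have t1 : -b * (-2*a*w/d) = 2*(a*b)*w/d := by ring
  rw [t2a, t2b, t2c, t1, hab, div_sub_div _ _ hd hqd, div_div,
    div_eq_div_iff (mul_ne_zero hq2 (two_ne_zero)) (mul_ne_zero hd hqd), hdval, ← hq]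
  ring

lemma dz_Cf (z : ℂ) :
    fderiv ℝ (fun w => ((Cf w : ℝ) : ℂ)) z 1
      - Complex.I * fderiv ℝ (fun w => ((Cf w : ℝ) : ℂ)) z Complex.I
      = 4 * (starRingEnd ℂ) z / ((Complex.normSq z + 1)^2 : ℝ) := by
  have hre : HasFDerivAt (fun w:ℂ => w.re) (Complex.reCLM : ℂ →L[ℝ] ℝ) z :=
    Complex.reCLM.hasFDerivAt
  have him : HasFDerivAt (fun w:ℂ => w.im) (Complex.imCLM : ℂ →L[ℝ] ℝ) z :=
    Complex.imCLM.hasFDerivAt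
  have hns : HasFDerivAt Complex.normSq
      ((z.re • Complex.reCLM + z.re • Complex.reCLM)
        + (z.im • Complex.imCLM + z.im • Complex.imCLM)) z := by
    have e : (Complex.normSq : ℂ → ℝ) = ((fun w : ℂ => w.re) * fun w => w.re) + (fun w : ℂ => w.im) * fun w => w.im := by
      funext w; simp [Complex.normSq_apply]
    rw [e]
    exact (hre.mul hre).add (him.mul him)
  set r := Complex.normSq z with hr
  have h0 : (0:ℝ) ≤ r := Complex.normSq_nonneg z
  have hne : r + 1 ≠ 0 := by nlinarith
  have hq : HasDerivAt (fun t : ℝ => (t - 1)/(t + 1)) (2/(r+1)^2) r := by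
    have := ((hasDerivAt_id r).sub_const 1).div ((hasDerivAt_id r).add_const 1) hne
    exact this.congr_deriv (by simp only [id_eq]; ring)
  have hC : HasFDerivAt Cf ((2/(r+1)^2) • ((z.re • Complex.reCLM + z.re • Complex.reCLM)
      + (z.im • Complex.imCLM + z.im • Complex.imCLM))) z :=
    by have := hq.comp_hasFDerivAt z hns; exact this
  have hf : HasFDerivAt (fun w => ((Cf w : ℝ) : ℂ))
      (Complex.ofRealCLM.comp ((2/(r+1)^2) • ((z.re • Complex.reCLM + z.re • Complex.reCLM)
        + (z.im • Complex.imCLM + z.im • Complex.imCLM)))) z :=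
    Complex.ofRealCLM.hasFDerivAt.comp z hC
  rw [hf.fderiv]
  simp only [ContinuousLinearMap.coe_comp', Function.comp_apply, ContinuousLinearMap.smul_apply,
    ContinuousLinearMap.add_apply, Complex.ofRealCLM_apply, Complex.reCLM_apply,
    Complex.imCLM_apply, smul_eq_mul, Complex.one_re, Complex.one_im, Complex.I_re, Complex.I_im]
  have h1 : (starRingEnd ℂ) z = (z.re : ℂ) - (z.im:ℂ) * Complex.I := by
    simp [Complex.ext_iff]
  have hne2 : ((r+1:ℝ):ℂ) ≠ 0 := by exact_mod_cast hne
  push_cast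
  rw [h1]
  field_simp
  ring

theorem stmt7 (H α : ℝ) (hH : 0 ≤ H) (hα : 0 < α)
    (hD : ∀ z : ℂ, 0 < Dd H α z) (z : ℂ) :
    dz (fun w => ((Cf w : ℝ) : ℂ)) z
      = -((H : ℂ) - (Real.sqrt α : ℂ) * Complex.I) * Af H α z
        - 2 * pf H α z * ((e2u H α z : ℂ))⁻¹ * (starRingEnd ℂ) (Af H α z) := by
  rw [dz, dz_Cf]
  set s := Real.sqrt α with hs
  have hs2 : s ^ 2 = α := Real.sq_sqrt hα.le
  have hspos : 0 < s := Real.sqrt_pos.mpr hα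
  set a : ℂ := (H : ℂ) + (s : ℂ) * Complex.I with ha_def
  set b : ℂ := (H : ℂ) - (s : ℂ) * Complex.I with hb_def
  set κ : ℂ := ((H ^ 2 + α : ℝ) : ℂ) with hκ_def
  set d : ℂ := ((Dd H α z : ℝ) : ℂ) with hd_def
  set E : ℂ := ((e2u H α z : ℝ) : ℂ) with hE_def
  set ρ : ℂ := ((Complex.normSq z : ℝ) : ℂ) with hρ_def
  have h0 : (0:ℝ) ≤ Complex.normSq z := Complex.normSq_nonneg z
  have hρ1 : (0:ℝ) < Complex.normSq z + 1 := by nlinarith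
  have ha : a ≠ 0 := by
    rw [ha_def]
    intro h
    have := congrArg Complex.im h
    simp at this
    exact hspos.ne' this
  have hHa : (0:ℝ) < H ^ 2 + α := by positivity
  have hκ : κ ≠ 0 := by
    rw [hκ_def]
    exact_mod_cast hHa.ne'
  have hρ : ρ + 1 ≠ 0 := by
    rw [hρ_def]
    have : ((Complex.normSq z + 1 : ℝ) : ℂ) ≠ 0 := by exact_mod_cast hρ1.ne'
    push_cast at this
    exact this
  have hd : d ≠ 0 := by
    rw [hd_def]
    exact_mod_cast (hD z).ne'
  have hab : a * b = κ := by
    rw [ha_def, hb_def, hκ_def]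
    push_cast [← hs2]
    ring_nf
    rw [Complex.I_sq]
    ring
  have hwz : z * (starRingEnd ℂ) z = ρ := Complex.mul_conj z
  have hdval : d = 4*(1-(α:ℂ))*ρ + κ*(ρ+1)^2 := by
    rw [hd_def, hκ_def, hρ_def, Dd]
    push_cast
    ring
  have hE : E = 4*(ρ+1)^2*κ/d^2 := by
    rw [hE_def, hκ_def, hρ_def, hd_def, e2u]
    push_cast
    ring
  have hconj : (starRingEnd ℂ) (Af H α z) = -2*b*z/d := by
    rw [Af, hb_def, hd_def, map_div₀]
    simp only [map_mul, map_neg, map_ofNat, map_add, Complex.conj_conj, Complex.conj_ofReal,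
      Complex.conj_I, ← hs]
    ring
  have hcast : (((Complex.normSq z + 1)^2 : ℝ) : ℂ) = (ρ+1)^2 := by
    rw [hρ_def]; push_cast; ring
  rw [hcast, pf, hconj, Af]
  exact alg a b κ d E ((starRingEnd ℂ) z) z ρ (α:ℂ) ha hκ hρ hd hab hwz hdval hE
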